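/- Let I ⊆ ℝ be an open interval and y : I → ℝ be twice differentiable with y''(s) = y(s)·y'(s) for all s ∈ I. Then exactly one of the following holds: (a) y is constant on I; (b) there exists c ∈ ℝ with y(s) = −2/(s + c) for all s ∈ I; (c) there exist μ > 0 and c ∈ ℝ with y(s) = −2μ·cot(μ(s + c)) for all s ∈ I; (d) there exist μ > 0 and c ∈ ℝ with y(s) = −2μ·tanh(μ(s + c)) for all s ∈ I; (e) there exist μ > 0 and c ∈ ℝ with y(s) = −2μ·coth(μ(s + c)) for all s ∈ I. -/

import Mathlib

open Real Set

private lemma myConstOn {I : Set ℝ} (hI : IsOpen I) (hc : Convex ℝ I) {F : ℝ → ℝ}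
    (hF : ∀ s ∈ I, HasDerivAt F 0 s) {x x' : ℝ} (hx : x ∈ I) (hx' : x' ∈ I) : F x = F x' := by
  refine hc.is_const_of_fderivWithin_eq_zero
    (fun s hs => ((hF s hs).differentiableAt).differentiableWithinAt) (fun s hs => ?_) hx hx'
  rw [fderivWithin_of_isOpen hI hs]
  rw [(hF s hs).hasFDerivAt.fderiv]
  ext
  simp

private lemma myExistsNe {I : Set ℝ} (hI : IsOpen I) {s₀ : ℝ} (hs₀ : s₀ ∈ I) (x : ℝ) :
    ∃ s ∈ I, s ≠ x := by
  obtain ⟨ε, hε, hball⟩ := Metric.isOpen_iff.1 hI s₀ hs₀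
  by_cases h : s₀ = x
  · refine ⟨s₀ + ε/2, hball ?_, fun hc => by rw [← h] at hc; linarith⟩
    simp only [Metric.mem_ball, Real.dist_eq, add_sub_cancel_left]
    rw [abs_of_pos (by linarith)]; linarith
  · exact ⟨s₀, hs₀, h⟩

private lemma myExistsSinNe {I : Set ℝ} (hI : IsOpen I) {s₀ : ℝ} (hs₀ : s₀ ∈ I) {μ : ℝ}
    (hμ : 0 < μ) (c : ℝ) : ∃ s ∈ I, Real.sin (μ * (s + c)) ≠ 0 := by
  by_contra h
  push_neg at h
  obtain ⟨ε, hε, hball⟩ := Metric.isOpen_iff.1 hI s₀ hs₀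
  set δ := min (ε/2) (π/(2*μ)) with hδdef
  have hδ : 0 < δ := lt_min (by linarith) (by positivity)
  have hs₁ : s₀ + δ ∈ I := by
    apply hball
    simp only [Metric.mem_ball, Real.dist_eq, add_sub_cancel_left]
    rw [abs_of_pos hδ]
    exact lt_of_le_of_lt (min_le_left _ _) (by linarith)
  obtain ⟨m, hm⟩ := Real.sin_eq_zero_iff.1 (h s₀ hs₀)
  obtain ⟨n, hn⟩ := Real.sin_eq_zero_iff.1 (h _ hs₁)
  have hdiff : ((n - m : ℤ) : ℝ) * π = μ * δ := by
    push_cast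
    rw [sub_mul, hm, hn]; ring
  have hμδ : 0 < μ * δ := by positivity
  have hμδ2 : μ * δ ≤ π / 2 := by
    have : δ ≤ π / (2*μ) := min_le_right _ _
    rw [le_div_iff₀ (by positivity)] at this
    linarith
  have h1 : (0:ℝ) < ((n - m : ℤ) : ℝ) * π := by rw [hdiff]; exact hμδ
  have h2 : (0:ℤ) < n - m := by
    by_contra h2
    push_neg at h2
    have : ((n - m : ℤ) : ℝ) ≤ 0 := by exact_mod_cast h2
    nlinarith [Real.pi_pos]
  have h3 : (1:ℝ) ≤ ((n - m : ℤ) : ℝ) := by exact_mod_cast h2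
  nlinarith [Real.pi_pos]

theorem ode_classification_y''_eq_y_mul_y'
    (I : Set ℝ) (hI : IsOpen I) (hI' : I.OrdConnected) (hne : I.Nonempty)
    (y : ℝ → ℝ)
    (hy : ∀ s ∈ I, DifferentiableAt ℝ y s)
    (hy' : ∀ s ∈ I, DifferentiableAt ℝ (deriv y) s)
    (hode : ∀ s ∈ I, deriv (deriv y) s = y s * deriv y s) :
    ∃! i : Fin 5,
      ![ (∃ k : ℝ, ∀ s ∈ I, y s = k),
         (∃ c : ℝ, ∀ s ∈ I, y s = -2 / (s + c)),
         (∃ μ : ℝ, 0 < μ ∧ ∃ c : ℝ, ∀ s ∈ I, y s = -2 * μ * Real.cot (μ * (s + c))),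
         (∃ μ : ℝ, 0 < μ ∧ ∃ c : ℝ, ∀ s ∈ I, y s = -2 * μ * Real.tanh (μ * (s + c))),
         (∃ μ : ℝ, 0 < μ ∧ ∃ c : ℝ, ∀ s ∈ I,
            y s = -2 * μ * (Real.cosh (μ * (s + c)) / Real.sinh (μ * (s + c)))) ] i := by
  obtain ⟨s₀, hs₀⟩ := hne
  have hconv : Convex ℝ I := hI'.convex
  -- antiderivative of y
  set Y : ℝ → ℝ := fun s => ∫ t in s₀..s, y t with hYdef
  have hYd : ∀ s ∈ I, HasDerivAt Y (y s) s := by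
    intro s hs
    apply intervalIntegral.integral_hasDerivAt_right
    · exact (ContinuousOn.mono (fun t ht => (hy t ht).continuousAt.continuousWithinAt)
        (hI'.uIcc_subset hs₀ hs)).intervalIntegrable
    · exact AEStronglyMeasurable.stronglyMeasurableAtFilter_of_mem
        ((ContinuousOn.aestronglyMeasurable (fun t ht => (hy t ht).continuousAt.continuousWithinAt)
          hI.measurableSet)) (hI.mem_nhds hs)
    · exact (hy s hs).continuousAt
  have hdy : ∀ s ∈ I, HasDerivAt (deriv y) (y s * deriv y s) s :=
    fun s hs => (hode s hs) ▸ (hy' s hs).hasDerivAt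
  -- K : the invariant sign of deriv y
  obtain ⟨K, hKs⟩ : ∃ K : ℝ, ∀ s ∈ I, deriv y s = K * Real.exp (Y s) := by
    refine ⟨deriv y s₀ * Real.exp (-Y s₀), ?_⟩
    have hg : ∀ s ∈ I, HasDerivAt (fun s => deriv y s * Real.exp (-Y s)) 0 s := by
      intro s hs
      have h2 : HasDerivAt (fun s => Real.exp (-Y s)) (-y s * Real.exp (-Y s)) s := by
        have := ((hYd s hs).neg).exp
        refine this.congr_deriv (Eq.symm ?_); simp only [Pi.neg_apply]; ring
      have := (hdy s hs).mul h2
      refine this.congr_deriv (Eq.symm ?_); ring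
    intro s hs
    have h := myConstOn hI hconv hg hs hs₀
    have h2 := congrArg (· * Real.exp (Y s)) h
    simp only [mul_assoc, ← Real.exp_add, neg_add_cancel, Real.exp_zero, mul_one] at h2
    rw [mul_assoc, ← Real.exp_add]
    simpa using h2
  -- a : the constant of the first integral  y' = y²/2 + a
  obtain ⟨a, hA⟩ : ∃ a : ℝ, ∀ s ∈ I, deriv y s = (y s)^2/2 + a := by
    refine ⟨deriv y s₀ - (y s₀)^2/2, ?_⟩
    have hg : ∀ s ∈ I, HasDerivAt (fun s => deriv y s - (y s)^2/2) 0 s := by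
      intro s hs
      have h2 : HasDerivAt (fun s => (y s)^2/2) (y s * deriv y s) s := by
        have := (((hy s hs).hasDerivAt.pow 2)).div_const 2
        refine this.congr_deriv (Eq.symm ?_); ring
      have := (hdy s hs).sub h2
      refine this.congr_deriv (Eq.symm ?_); ring
    intro s hs
    have h := myConstOn hI hconv hg hs hs₀
    linarith
  have hexp : ∀ s : ℝ, 0 < Real.exp (Y s) := fun s => Real.exp_pos _
  -- sign transfer
  have hpos : ∀ s ∈ I, 0 < deriv y s ↔ 0 < K := by
    intro s hs; rw [hKs s hs]
    constructor
    · intro h; nlinarith [hexp s]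
    · intro h; positivity
  have hneg : ∀ s ∈ I, deriv y s < 0 ↔ K < 0 := by
    intro s hs; rw [hKs s hs]
    constructor
    · intro h; nlinarith [hexp s]
    · intro h; exact mul_neg_of_neg_of_pos h (hexp s)
  -- the five case-implications (for uniqueness)
  have u0 : (∃ k : ℝ, ∀ s ∈ I, y s = k) → K = 0 := by
    rintro ⟨k, hk⟩
    have hev : y =ᶠ[nhds s₀] (fun _ => k) :=
      Filter.eventuallyEq_of_mem (hI.mem_nhds hs₀) (fun s hs => hk s hs)
    have : deriv y s₀ = 0 := by rw [hev.deriv_eq]; simp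
    rw [hKs s₀ hs₀] at this
    rcases mul_eq_zero.1 this with h | h
    · exact h
    · exact absurd h (Real.exp_ne_zero _)
  have u1 : (∃ c : ℝ, ∀ s ∈ I, y s = -2 / (s + c)) → 0 < K ∧ a = 0 := by
    rintro ⟨c, hc⟩
    obtain ⟨s₁, hs₁, hne₁⟩ := myExistsNe hI hs₀ (-c)
    have hsc : s₁ + c ≠ 0 := fun h => hne₁ (by linarith)
    have hev : y =ᶠ[nhds s₁] (fun s => -2/(s+c)) := by
      have hopen : IsOpen (I ∩ {s : ℝ | s + c ≠ 0}) :=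
        hI.inter (IsOpen.preimage (continuous_add_right c) isOpen_ne)
      exact Filter.eventuallyEq_of_mem (hopen.mem_nhds ⟨hs₁, hsc⟩) (fun s hs => hc s hs.1)
    have hder : HasDerivAt (fun s => -2/(s+c)) (2/((s₁+c)^2)) s₁ := by
      have h1 : HasDerivAt (fun s : ℝ => s + c) 1 s₁ := (hasDerivAt_id s₁).add_const c
      have := (hasDerivAt_const s₁ (-2:ℝ)).div h1 hsc
      refine this.congr_deriv (Eq.symm ?_)
      field_simp
      ring
    have hds : deriv y s₁ = 2/((s₁+c)^2) := by rw [hev.deriv_eq, hder.deriv]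
    constructor
    · rw [← hpos s₁ hs₁, hds]; positivity
    · have h := hA s₁ hs₁
      rw [hds, hc s₁ hs₁] at h
      have h' : a = 2/((s₁+c)^2) - (-2/(s₁+c))^2/2 := by linarith
      rw [h', div_pow, neg_pow]
      norm_num
      ring
  have u2 : (∃ μ : ℝ, 0 < μ ∧ ∃ c : ℝ, ∀ s ∈ I, y s = -2 * μ * Real.cot (μ * (s + c))) →
      0 < K ∧ 0 < a := by
    rintro ⟨μ, hμ, c, hc⟩
    obtain ⟨s₁, hs₁, hsin⟩ := myExistsSinNe hI hs₀ hμ c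
    have hev : y =ᶠ[nhds s₁] (fun s => -2*μ*(Real.cos (μ*(s+c))/Real.sin (μ*(s+c)))) := by
      refine Filter.eventuallyEq_of_mem (hI.mem_nhds hs₁) (fun s hs => ?_)
      rw [hc s hs, Real.cot_eq_cos_div_sin]
    have hu : HasDerivAt (fun s : ℝ => μ*(s+c)) μ s₁ := by
      simpa using (((hasDerivAt_id s₁).add_const c).const_mul μ)
    have hpy := Real.sin_sq_add_cos_sq (μ*(s₁+c))
    have hder : HasDerivAt (fun s => -2*μ*(Real.cos (μ*(s+c))/Real.sin (μ*(s+c))))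
        (2*μ^2/(Real.sin (μ*(s₁+c)))^2) s₁ := by
      have := ((hu.cos).div (hu.sin) hsin).const_mul (-2*μ)
      refine this.congr_deriv (Eq.symm ?_)
      field_simp
      linear_combination (-1) * hpy
    have hd : deriv y s₁ = 2*μ^2/(Real.sin (μ*(s₁+c)))^2 := by rw [hev.deriv_eq, hder.deriv]
    constructor
    · rw [← hpos s₁ hs₁, hd]
      have : Real.sin (μ*(s₁+c))^2 > 0 := by positivity
      positivity
    · have hAA := hA s₁ hs₁
      rw [hd, hc s₁ hs₁, Real.cot_eq_cos_div_sin] at hAA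
      have h9 : a = 2*μ^2 := by
        field_simp at hAA
        have h10 : (a - 2*μ^2) * (Real.sin (μ*(s₁+c)))^4 = 0 := by
          linear_combination (-Real.sin (μ*(s₁+c))^2) * hAA + (-2*μ^2*Real.sin (μ*(s₁+c))^2) * hpy
        rcases mul_eq_zero.1 h10 with h | h
        · linarith
        · exact absurd h (pow_ne_zero _ hsin)
      rw [h9]
      positivity
  have u3 : (∃ μ : ℝ, 0 < μ ∧ ∃ c : ℝ, ∀ s ∈ I, y s = -2 * μ * Real.tanh (μ * (s + c))) →
      K < 0 := by
    rintro ⟨μ, hμ, c, hc⟩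
    have hcosh : Real.cosh (μ*(s₀+c)) ≠ 0 := ne_of_gt (Real.cosh_pos _)
    have hev : y =ᶠ[nhds s₀] (fun s => -2*μ*(Real.sinh (μ*(s+c))/Real.cosh (μ*(s+c)))) := by
      refine Filter.eventuallyEq_of_mem (hI.mem_nhds hs₀) (fun s hs => ?_)
      rw [hc s hs, Real.tanh_eq_sinh_div_cosh]
    have hu : HasDerivAt (fun s : ℝ => μ*(s+c)) μ s₀ := by
      simpa using (((hasDerivAt_id s₀).add_const c).const_mul μ)
    have hder : HasDerivAt (fun s => -2*μ*(Real.sinh (μ*(s+c))/Real.cosh (μ*(s+c))))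
        (-2*μ^2/(Real.cosh (μ*(s₀+c)))^2) s₀ := by
      have := ((hu.sinh.div hu.cosh hcosh)).const_mul (-2*μ)
      refine this.congr_deriv (Eq.symm ?_)
      have hpyth := Real.cosh_sq_sub_sinh_sq (μ*(s₀+c))
      field_simp
      linear_combination hpyth
    have hd : deriv y s₀ = -2*μ^2/(Real.cosh (μ*(s₀+c)))^2 := by rw [hev.deriv_eq, hder.deriv]
    rw [← hneg s₀ hs₀, hd]
    have := Real.cosh_pos (μ*(s₀+c))
    have h2 : 0 < (Real.cosh (μ*(s₀+c)))^2 := by positivity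
    exact div_neg_of_neg_of_pos (by nlinarith) h2
  have u4 : (∃ μ : ℝ, 0 < μ ∧ ∃ c : ℝ, ∀ s ∈ I,
      y s = -2 * μ * (Real.cosh (μ * (s + c)) / Real.sinh (μ * (s + c)))) → 0 < K ∧ a < 0 := by
    rintro ⟨μ, hμ, c, hc⟩
    obtain ⟨s₁, hs₁, hne₁⟩ := myExistsNe hI hs₀ (-c)
    have hu0 : μ*(s₁+c) ≠ 0 := by
      intro h
      rcases mul_eq_zero.1 h with h | h
      · exact absurd h (ne_of_gt hμ)
      · exact hne₁ (by linarith)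
    have hsh : Real.sinh (μ*(s₁+c)) ≠ 0 := Real.sinh_ne_zero.2 hu0
    have hev : y =ᶠ[nhds s₁] (fun s => -2*μ*(Real.cosh (μ*(s+c))/Real.sinh (μ*(s+c)))) :=
      Filter.eventuallyEq_of_mem (hI.mem_nhds hs₁) (fun s hs => hc s hs)
    have hu : HasDerivAt (fun s : ℝ => μ*(s+c)) μ s₁ := by
      simpa using (((hasDerivAt_id s₁).add_const c).const_mul μ)
    have hpy := Real.cosh_sq_sub_sinh_sq (μ*(s₁+c))
    have hder : HasDerivAt (fun s => -2*μ*(Real.cosh (μ*(s+c))/Real.sinh (μ*(s+c))))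
        (2*μ^2/(Real.sinh (μ*(s₁+c)))^2) s₁ := by
      have := (hu.cosh.div hu.sinh hsh).const_mul (-2*μ)
      refine this.congr_deriv (Eq.symm ?_)
      field_simp
      linear_combination (-1) * hpy
    have hd : deriv y s₁ = 2*μ^2/(Real.sinh (μ*(s₁+c)))^2 := by rw [hev.deriv_eq, hder.deriv]
    constructor
    · rw [← hpos s₁ hs₁, hd]
      have : Real.sinh (μ*(s₁+c))^2 > 0 := by positivity
      positivity
    · have hAA := hA s₁ hs₁
      rw [hd, hc s₁ hs₁] at hAA
      have h9 : a = -2*μ^2 := by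
        field_simp at hAA
        have h10 : (a + 2*μ^2) * (Real.sinh (μ*(s₁+c)))^4 = 0 := by
          linear_combination (-Real.sinh (μ*(s₁+c))^2) * hAA + (-2*μ^2*Real.sinh (μ*(s₁+c))^2) * hpy
        rcases mul_eq_zero.1 h10 with h | h
        · linarith
        · exact absurd h (pow_ne_zero _ hsh)
      rw [h9]
      nlinarith
  -- construction in each case
  rcases lt_trichotomy K 0 with hK | hK | hK
  · -- K < 0 : tanh case
    have hP : ∃ μ : ℝ, 0 < μ ∧ ∃ c : ℝ, ∀ s ∈ I, y s = -2 * μ * Real.tanh (μ * (s + c)) := by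
      have hdneg : ∀ s ∈ I, deriv y s < 0 := fun s hs => (hneg s hs).2 hK
      have haneg : a < 0 := by
        have h1 := hdneg s₀ hs₀
        have h2 := hA s₀ hs₀
        nlinarith [sq_nonneg (y s₀)]
      set μ : ℝ := Real.sqrt (-a/2) with hμdef
      have hμ : 0 < μ := Real.sqrt_pos.2 (by linarith)
      have haμ : a = -2*μ^2 := by
        rw [hμdef, Real.sq_sqrt (by linarith : -a/2 ≥ 0)]
        ring
      have hrel : ∀ s ∈ I, (2*μ - y s) * (2*μ + y s) = -2 * deriv y s := by
        intro s hs
        have := hA s hs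
        rw [haμ] at this
        nlinarith
      have hrelpos : ∀ s ∈ I, 0 < (2*μ - y s) * (2*μ + y s) := by
        intro s hs
        rw [hrel s hs]
        have := hdneg s hs; linarith
      have hne1 : ∀ s ∈ I, 2*μ - y s ≠ 0 := by
        intro s hs h0
        have := hrelpos s hs
        rw [h0, zero_mul] at this; exact lt_irrefl 0 this
      -- the conserved quantity
      have hg : ∀ s ∈ I, HasDerivAt (fun s => (2*μ + y s)/(2*μ - y s) * Real.exp (2*μ*s)) 0 s := by
        intro s hs
        have h1 : HasDerivAt (fun s => 2*μ + y s) (deriv y s) s := by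
          simpa using ((hy s hs).hasDerivAt.const_add (2*μ))
        have h2 : HasDerivAt (fun s => 2*μ - y s) (-deriv y s) s := by
          simpa using ((hy s hs).hasDerivAt.const_sub (2*μ))
        have h3 := h1.div h2 (hne1 s hs)
        have h6 := hrel s hs
        have h3' : HasDerivAt (fun s => (2*μ + y s)/(2*μ - y s))
            (-2*μ*(2*μ + y s)/(2*μ - y s)) s := by
          refine h3.congr_deriv (Eq.symm ?_)
          rw [div_eq_div_iff (hne1 s hs) (pow_ne_zero 2 (hne1 s hs))]
          linear_combination ((2*μ - y s) * (-2*μ)) * h6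
        have h4 : HasDerivAt (fun s : ℝ => Real.exp (2*μ*s)) (2*μ*Real.exp (2*μ*s)) s := by
          simpa [mul_comm] using (((hasDerivAt_id s).const_mul (2*μ))).exp
        have h5 := h3'.mul h4
        refine h5.congr_deriv (Eq.symm ?_)
        ring
      set r₀ : ℝ := (2*μ + y s₀)/(2*μ - y s₀) * Real.exp (2*μ*s₀) with hr₀def
      have hr₀pos : 0 < r₀ := by
        rw [hr₀def]
        apply mul_pos _ (Real.exp_pos _)
        have h7 : (2*μ + y s₀)/(2*μ - y s₀)
            = ((2*μ + y s₀)*(2*μ - y s₀))/((2*μ - y s₀)^2) := by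
          rw [pow_two, mul_comm (2*μ + y s₀) (2*μ - y s₀), mul_div_mul_left _ _ (hne1 s₀ hs₀)]
        rw [h7]
        apply div_pos
        · rw [mul_comm]; exact hrelpos s₀ hs₀
        · exact pow_two_pos_of_ne_zero (hne1 s₀ hs₀)
      set c : ℝ := -Real.log r₀ / (2*μ) with hcdef
      refine ⟨μ, hμ, c, fun s hs => ?_⟩
      have hconst := myConstOn hI hconv hg hs hs₀
      have hratio : (2*μ + y s)/(2*μ - y s) = Real.exp (-(2*μ)*(s+c)) := by
        have hconst' : (2*μ + y s)/(2*μ - y s) * Real.exp (2*μ*s) = r₀ := by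
          rw [hr₀def]; exact hconst
        have h8 : (2*μ + y s)/(2*μ - y s) = r₀ * Real.exp (-(2*μ*s)) := by
          rw [← hconst', mul_assoc, ← Real.exp_add, add_neg_cancel, Real.exp_zero, mul_one]
        rw [h8, ← Real.exp_log hr₀pos, ← Real.exp_add]
        congr 1
        rw [hcdef]
        field_simp
        ring
      have h2ne := hne1 s hs
      rw [div_eq_iff h2ne] at hratio
      have hEe : Real.exp (-(2*μ)*(s+c))
          = (Real.exp (μ*(s+c)))⁻¹ * (Real.exp (μ*(s+c)))⁻¹ := by
        rw [← Real.exp_neg, ← Real.exp_add]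
        congr 1
        ring
      rw [hEe] at hratio
      rw [Real.tanh_eq_sinh_div_cosh, Real.sinh_eq, Real.cosh_eq, Real.exp_neg]
      have ht : Real.exp (μ*(s+c)) ≠ 0 := Real.exp_ne_zero _
      have hch : (0:ℝ) < Real.exp (μ*(s+c)) + (Real.exp (μ*(s+c)))⁻¹ := by positivity
      field_simp at hratio ⊢
      linear_combination hratio
    refine ⟨3, hP, ?_⟩
    intro j hj
    fin_cases j
    · exact absurd (u0 hj) (by intro hcon; linarith)
    · exact absurd (u1 hj).1 (by intro hcon; linarith)
    · exact absurd (u2 hj).1 (by intro hcon; linarith)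
    · rfl
    · exact absurd (u4 hj).1 (by intro hcon; linarith)
  · -- K = 0 : constant case
    have hP : ∃ k : ℝ, ∀ s ∈ I, y s = k := by
      refine ⟨y s₀, fun s hs => ?_⟩
      refine myConstOn hI hconv (fun t ht => ?_) hs hs₀
      have := (hy t ht).hasDerivAt
      rwa [hKs t ht, hK, zero_mul] at this
    refine ⟨0, hP, ?_⟩
    intro j hj
    fin_cases j
    · rfl
    · exact absurd (u1 hj).1 (by intro hcon; linarith)
    · exact absurd (u2 hj).1 (by intro hcon; linarith)
    · exact absurd (u3 hj) (by intro hcon; linarith)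
    · exact absurd (u4 hj).1 (by intro hcon; linarith)
  · -- K > 0
    have hdpos : ∀ s ∈ I, 0 < deriv y s := fun s hs => (hpos s hs).2 hK
    rcases lt_trichotomy a 0 with ha | ha | ha
    · -- coth case
      have hP : ∃ μ : ℝ, 0 < μ ∧ ∃ c : ℝ, ∀ s ∈ I,
          y s = -2 * μ * (Real.cosh (μ * (s + c)) / Real.sinh (μ * (s + c))) := by
        set μ : ℝ := Real.sqrt (-a/2) with hμdef
        have hμ : 0 < μ := Real.sqrt_pos.2 (by linarith)
        have haμ : a = -2*μ^2 := by
          rw [hμdef, Real.sq_sqrt (by linarith : -a/2 ≥ 0)]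
          ring
        have hrel : ∀ s ∈ I, (y s - 2*μ) * (y s + 2*μ) = 2 * deriv y s := by
          intro s hs
          have := hA s hs
          rw [haμ] at this
          nlinarith
        have hrelpos : ∀ s ∈ I, 0 < (y s - 2*μ) * (y s + 2*μ) := by
          intro s hs
          rw [hrel s hs]
          have := hdpos s hs; linarith
        have hne1 : ∀ s ∈ I, y s + 2*μ ≠ 0 := by
          intro s hs h0
          have := hrelpos s hs
          rw [h0, mul_zero] at this; exact lt_irrefl 0 this
        have hg : ∀ s ∈ I,
            HasDerivAt (fun s => (y s - 2*μ)/(y s + 2*μ) * Real.exp (-(2*μ)*s)) 0 s := by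
          intro s hs
          have h1 : HasDerivAt (fun s => y s - 2*μ) (deriv y s) s := by
            simpa using ((hy s hs).hasDerivAt.sub_const (2*μ))
          have h2 : HasDerivAt (fun s => y s + 2*μ) (deriv y s) s := by
            simpa using ((hy s hs).hasDerivAt.add_const (2*μ))
          have h3 := h1.div h2 (hne1 s hs)
          have h6 := hrel s hs
          have h3' : HasDerivAt (fun s => (y s - 2*μ)/(y s + 2*μ))
              (2*μ*(y s - 2*μ)/(y s + 2*μ)) s := by
            refine h3.congr_deriv (Eq.symm ?_)
            rw [div_eq_div_iff (hne1 s hs) (pow_ne_zero 2 (hne1 s hs))]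
            linear_combination ((y s + 2*μ) * (2*μ)) * h6
          have h4 : HasDerivAt (fun s : ℝ => Real.exp (-(2*μ)*s))
              (-(2*μ)*Real.exp (-(2*μ)*s)) s := by
            simpa [mul_comm] using (((hasDerivAt_id s).const_mul (-(2*μ)))).exp
          have h5 := h3'.mul h4
          refine h5.congr_deriv (Eq.symm ?_)
          ring
        set q₀ : ℝ := (y s₀ - 2*μ)/(y s₀ + 2*μ) * Real.exp (-(2*μ)*s₀) with hq₀def
        have hq₀pos : 0 < q₀ := by
          rw [hq₀def]
          apply mul_pos _ (Real.exp_pos _)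
          have h7 : (y s₀ - 2*μ)/(y s₀ + 2*μ)
              = ((y s₀ - 2*μ)*(y s₀ + 2*μ))/((y s₀ + 2*μ)^2) := by
            rw [pow_two, mul_div_mul_right _ _ (hne1 s₀ hs₀)]
          rw [h7]
          exact div_pos (hrelpos s₀ hs₀) (pow_two_pos_of_ne_zero (hne1 s₀ hs₀))
        set c : ℝ := Real.log q₀ / (2*μ) with hcdef
        refine ⟨μ, hμ, c, fun s hs => ?_⟩
        have hconst := myConstOn hI hconv hg hs hs₀
        have hratio : (y s - 2*μ)/(y s + 2*μ) = Real.exp ((2*μ)*(s+c)) := by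
          have hconst' : (y s - 2*μ)/(y s + 2*μ) * Real.exp (-(2*μ)*s) = q₀ := by
            rw [hq₀def]; exact hconst
          have h8 : (y s - 2*μ)/(y s + 2*μ) = q₀ * Real.exp ((2*μ)*s) := by
            rw [← hconst', mul_assoc, ← Real.exp_add]
            simp
          rw [h8, ← Real.exp_log hq₀pos, ← Real.exp_add]
          congr 1
          rw [hcdef]
          field_simp
          ring
        rw [div_eq_iff (hne1 s hs)] at hratio
        have hshne : Real.sinh (μ*(s+c)) ≠ 0 := by
          refine Real.sinh_ne_zero.2 (fun h0 => ?_)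
          have hE1 : Real.exp ((2*μ)*(s+c)) = 1 := by
            rw [show (2*μ)*(s+c) = 2*(μ*(s+c)) by ring, h0]
            simp
          rw [hE1, one_mul] at hratio
          linarith
        have hEe : Real.exp ((2*μ)*(s+c))
            = Real.exp (μ*(s+c)) * Real.exp (μ*(s+c)) := by
          rw [← Real.exp_add]
          congr 1
          ring
        rw [hEe] at hratio
        have hden : Real.exp (μ*(s+c)) - (Real.exp (μ*(s+c)))⁻¹ ≠ 0 := by
          rw [Real.sinh_eq] at hshne
          have := (div_ne_zero_iff.1 hshne).1
          rwa [Real.exp_neg] at this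
        rw [Real.cosh_eq, Real.sinh_eq, Real.exp_neg]
        have ht : Real.exp (μ*(s+c)) ≠ 0 := Real.exp_ne_zero _
        have hee : Real.exp (μ*(s+c)) * (Real.exp (μ*(s+c)))⁻¹ = 1 := mul_inv_cancel₀ ht
        rw [div_div_div_cancel_right₀ (two_ne_zero), ← mul_div_assoc, eq_div_iff hden]
        linear_combination (-(Real.exp (μ*(s+c)))⁻¹) * hratio
          + (-(Real.exp (μ*(s+c)))*(y s + 2*μ)) * hee
      refine ⟨4, hP, ?_⟩
      intro j hj
      fin_cases j
      · exact absurd (u0 hj) (by intro hcon; linarith)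
      · exact absurd (u1 hj).2 (by intro hcon; linarith)
      · exact absurd (u2 hj).2 (by intro hcon; linarith)
      · exact absurd (u3 hj) (by intro hcon; linarith)
      · rfl
    · -- -2/(s+c) case
      have hP : ∃ c : ℝ, ∀ s ∈ I, y s = -2 / (s + c) := by
        have hy0 : ∀ s ∈ I, y s ≠ 0 := by
          intro s hs h0
          have h := hA s hs
          rw [h0, ha] at h
          simp at h
          have := hdpos s hs; linarith
        have hg : ∀ s ∈ I, HasDerivAt (fun s => -2 / y s - s) 0 s := by
          intro s hs
          have h1 : HasDerivAt (fun s => -2 / y s) (2 * deriv y s / (y s)^2) s := by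
            have := (hasDerivAt_const s (-2:ℝ)).div (hy s hs).hasDerivAt (hy0 s hs)
            refine this.congr_deriv (Eq.symm ?_)
            field_simp
            ring
          have h2 := h1.sub (hasDerivAt_id s)
          refine h2.congr_deriv (Eq.symm ?_)
          have hAs := hA s hs
          rw [ha, add_zero] at hAs
          rw [hAs]
          field_simp [hy0 s hs]
          ring
        refine ⟨-2 / y s₀ - s₀, fun s hs => ?_⟩
        have h := myConstOn hI hconv hg hs hs₀
        have h2 : s + (-2 / y s₀ - s₀) = -2 / y s := by linarith
        rw [h2, eq_div_iff (div_ne_zero (by norm_num) (hy0 s hs))]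
        rw [mul_comm, div_mul_cancel₀ _ (hy0 s hs)]
      refine ⟨1, hP, ?_⟩
      intro j hj
      fin_cases j
      · exact absurd (u0 hj) (by intro hcon; linarith)
      · rfl
      · exact absurd (u2 hj).2 (by intro hcon; linarith)
      · exact absurd (u3 hj) (by intro hcon; linarith)
      · exact absurd (u4 hj).2 (by intro hcon; linarith)
    · -- cot case
      have hP : ∃ μ : ℝ, 0 < μ ∧ ∃ c : ℝ, ∀ s ∈ I,
          y s = -2 * μ * Real.cot (μ * (s + c)) := by
        set μ : ℝ := Real.sqrt (a/2) with hμdef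
        have hμ : 0 < μ := Real.sqrt_pos.2 (by linarith)
        have haμ : a = 2*μ^2 := by
          rw [hμdef, Real.sq_sqrt (by linarith : a/2 ≥ 0)]
          ring
        have hg : ∀ s ∈ I,
            HasDerivAt (fun s => Real.arctan (y s/(2*μ)) - μ*s) 0 s := by
          intro s hs
          have h1 : HasDerivAt (fun s => y s/(2*μ)) (deriv y s/(2*μ)) s :=
            (hy s hs).hasDerivAt.div_const _
          have h2 := h1.arctan
          have h3 : HasDerivAt (fun s : ℝ => μ*s) μ s := by
            simpa using ((hasDerivAt_id s).const_mul μ)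
          have h5 := h2.sub h3
          refine h5.congr_deriv (Eq.symm ?_)
          have h6 := hA s hs
          rw [haμ] at h6
          rw [h6]
          field_simp
          ring
        set b : ℝ := Real.arctan (y s₀/(2*μ)) - μ*s₀ with hbdef
        set c : ℝ := (b + π/2)/μ with hcdef
        refine ⟨μ, hμ, c, fun s hs => ?_⟩
        have hconst : Real.arctan (y s/(2*μ)) - μ*s = b := by
          rw [hbdef]; exact myConstOn hI hconv hg hs hs₀
        have harc : Real.arctan (y s/(2*μ)) = μ*s + b := by linarith
        have h8 : y s/(2*μ) = Real.tan (μ*s + b) := by rw [← harc, Real.tan_arctan]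
        have hcc : μ*(s+c) = (μ*s + b) + π/2 := by
          rw [hcdef]
          field_simp
          ring
        have hcot : Real.cot (μ*(s+c)) = - Real.tan (μ*s + b) := by
          rw [hcc, Real.cot_eq_cos_div_sin, Real.cos_add_pi_div_two, Real.sin_add_pi_div_two,
            Real.tan_eq_sin_div_cos, neg_div]
        rw [hcot, ← h8]
        field_simp
      refine ⟨2, hP, ?_⟩
      intro j hj
      fin_cases j
      · exact absurd (u0 hj) (by intro hcon; linarith)
      · exact absurd (u1 hj).2 (by intro hcon; linarith)
      · rfl
      · exact absurd (u3 hj) (by intro hcon; linarith)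
      · exact absurd (u4 hj).2 (by intro hcon; linarith)
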